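/- Let d₁ = x₀² + x₀·x₁ + x₁² and d₂ = x₀²·x₁ + x₀·x₁² in MvPolynomial (Fin 2) (ZMod 2). Then (a) a polynomial p is fixed by the substitution automorphism associated with every matrix g ∈ GL (Fin 2) (ZMod 2) if and only if p belongs to Algebra.adjoin (ZMod 2) {d₁, d₂}; and (b) d₁ and d₂ are algebraically independent over ZMod 2. Hence the mod-2 Dickson algebra D(2) = H*(V₂)^{GL₂(F₂)} is the polynomial algebra F₂[d₁, d₂] on the Dickson invariants u² + uv + v² and uv(u + v). -/

import Mathlib

open MvPolynomial Matrix

/-- The substitution automorphism associated with a matrix `g`, sending each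
variable `X i` to `∑ j, g i j • X j`. -/
noncomputable def substAction {n : ℕ} (g : GL (Fin n) (ZMod 2)) :
    MvPolynomial (Fin n) (ZMod 2) →ₐ[ZMod 2] MvPolynomial (Fin n) (ZMod 2) :=
  MvPolynomial.aeval fun i => ∑ j, (g : Matrix (Fin n) (Fin n) (ZMod 2)) i j • X j

section DicksonProof
open Polynomial

namespace DicksonAux

variable {R : Type*} [CommRing R] [Nontrivial R]

/-- digits: a polynomial of small degree equals the sum of its coefficients times powers. -/
theorem digits (n : ℕ) (p : R[X]) (h : p.natDegree < n) :
    p = ∑ i : Fin n, Polynomial.C (p.coeff i) * Polynomial.X ^ (i : ℕ) := by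
  rw [Fin.sum_univ_eq_sum_range (fun i => Polynomial.C (p.coeff i) * Polynomial.X ^ i) n]
  simpa [Polynomial.C_mul_X_pow_eq_monomial] using p.as_sum_range' n h

theorem core_exists {f : R[X]} (hf : f.Monic) {n : ℕ} (hd : f.natDegree = n) (hn : n ≠ 0) :
    ∀ p : R[X], ∃ c : Fin n → R[X], p = ∑ i : Fin n, (c i).comp f * Polynomial.X ^ (i : ℕ) := by
  have hdf : f.degree = n := by rw [degree_eq_natDegree hf.ne_zero, hd]
  intro p
  obtain ⟨N, hN⟩ : ∃ N, p.natDegree < N := ⟨p.natDegree + 1, Nat.lt_succ_self _⟩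
  induction N using Nat.strong_induction_on generalizing p with
  | _ N IH =>
    by_cases hlow : p.natDegree < n
    · exact ⟨fun i => Polynomial.C (p.coeff i), by simpa using digits n p hlow⟩
    · push_neg at hlow
      have hq : (p /ₘ f).natDegree < p.natDegree := by
        rw [natDegree_divByMonic p hf, hd]
        omega
      obtain ⟨c', hc'⟩ := IH p.natDegree hN (p /ₘ f) hq
      refine ⟨fun i => Polynomial.X * c' i + Polynomial.C ((p %ₘ f).coeff i), ?_⟩
      have hr : (p %ₘ f).natDegree < n := by
        have := degree_modByMonic_lt p hf
        by_cases h0 : p %ₘ f = 0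
        · simp [h0]; omega
        · exact (natDegree_lt_iff_degree_lt h0).mpr (hdf ▸ this)
      calc p = p %ₘ f + f * (p /ₘ f) := (modByMonic_add_div p f).symm
        _ = _ := by
          rw [hc']
          nth_rewrite 1 [digits n _ hr]
          rw [Finset.mul_sum, ← Finset.sum_add_distrib]
          refine Finset.sum_congr rfl fun i _ => ?_
          simp [add_comp, mul_comp, X_comp, C_comp]
          ring

theorem core_zero [IsDomain R] {f : R[X]} (hf : f.Monic) {n : ℕ} (hd : f.natDegree = n)
    (hn : n ≠ 0) :
    ∀ c : Fin n → R[X], (∑ i : Fin n, (c i).comp f * Polynomial.X ^ (i : ℕ)) = 0 → ∀ i, c i = 0 := by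
  have hdf : f.degree = n := by rw [degree_eq_natDegree hf.ne_zero, hd]
  intro c
  obtain ⟨M, hM⟩ : ∃ M, (∑ i, (c i).natDegree) < M := ⟨_ + 1, Nat.lt_succ_self _⟩
  induction M using Nat.strong_induction_on generalizing c with
  | _ M IH =>
    intro hsum
    by_cases hc : ∀ i, c i = 0
    · exact hc
    · -- decompose
      set e : Fin n → R[X] := fun i => (c i).divX with he
      set a : Fin n → R := fun i => (c i).coeff 0 with ha
      have hrep : ∀ i, c i = Polynomial.X * e i + Polynomial.C (a i) := fun i => (X_mul_divX_add (c i)).symm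
      have hsplit : (∑ i : Fin n, Polynomial.C (a i) * Polynomial.X ^ (i:ℕ))
          + f * (∑ i : Fin n, (e i).comp f * Polynomial.X ^ (i:ℕ)) = 0 := by
        rw [← hsum, Finset.mul_sum, ← Finset.sum_add_distrib]
        refine (Finset.sum_congr rfl fun i _ => ?_).symm
        nth_rewrite 1 [hrep i]
        simp only [add_comp, mul_comp, X_comp, C_comp]
        ring
      have hdegr : (∑ i : Fin n, Polynomial.C (a i) * Polynomial.X ^ (i:ℕ)).degree < f.degree := by
        rw [hdf]
        refine lt_of_le_of_lt (Polynomial.degree_sum_le _ _) ?_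
        rw [Finset.sup_lt_iff (by exact_mod_cast WithBot.bot_lt_coe n)]
        intro i _
        exact lt_of_le_of_lt (Polynomial.degree_C_mul_X_pow_le _ _) (by exact_mod_cast i.2)
      have huniq := div_modByMonic_unique (g := f) (f := (0 : R[X]))
        (∑ i : Fin n, (e i).comp f * Polynomial.X ^ (i:ℕ)) (∑ i : Fin n, Polynomial.C (a i) * Polynomial.X ^ (i:ℕ)) hf
        ⟨hsplit, hdegr⟩
      have hA : (∑ i : Fin n, (e i).comp f * Polynomial.X ^ (i:ℕ)) = 0 := by
        rw [← huniq.1, zero_divByMonic]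
      have hr0 : (∑ i : Fin n, Polynomial.C (a i) * Polynomial.X ^ (i:ℕ)) = 0 := by
        rw [← huniq.2, zero_modByMonic]
      have ha0 : ∀ i, a i = 0 := by
        intro i
        have := congrArg (fun q => Polynomial.coeff q (i:ℕ)) hr0
        simp only [Polynomial.finset_sum_coeff, Polynomial.coeff_C_mul, Polynomial.coeff_X_pow, Polynomial.coeff_zero,
          Fin.val_eq_val, mul_ite, mul_one, mul_zero, Finset.sum_ite_eq,
          Finset.mem_univ, if_true] at this
        exact this
      -- now apply IH to e
      have hmeas : (∑ i, (e i).natDegree) < ∑ i, (c i).natDegree := by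
        obtain ⟨i₀, hi₀⟩ := not_forall.mp hc
        refine Finset.sum_lt_sum (fun i _ => ?_) ⟨i₀, Finset.mem_univ _, ?_⟩
        · by_cases h0 : c i = 0
          · simp [he, h0]
          · exact natDegree_le_natDegree (degree_divX_lt h0).le |>.trans
              (le_of_eq rfl)
        · have h0 : c i₀ ≠ 0 := hi₀
          exact natDegree_lt_natDegree (mt (fun h => by
            rw [hrep i₀, h, ha0 i₀, mul_zero, Polynomial.C_0, add_zero]) hi₀) (degree_divX_lt h0)
      have he0 := IH (∑ i, (c i).natDegree) hM e hmeas hA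
      intro i
      rw [hrep i, he0 i, ha0 i, mul_zero, Polynomial.C_0, add_zero]

end DicksonAux
open DicksonAux

noncomputable section Charts

abbrev AA := MvPolynomial (Fin 2) (ZMod 2)
abbrev PP := Polynomial (ZMod 2)
abbrev BB := Polynomial PP

open MvPolynomial

/-- chart : X 0 ↦ Y (outer), X 1 ↦ C t (inner) -/
def toB : AA →ₐ[ZMod 2] BB :=
  aeval ![(Polynomial.X : BB), Polynomial.C Polynomial.X]

/-- chart 2 : X 0 ↦ C t, X 1 ↦ Y -/
def toB₂ : AA →ₐ[ZMod 2] BB :=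
  aeval ![Polynomial.C Polynomial.X, (Polynomial.X : BB)]

def toA : BB →ₐ[ZMod 2] AA :=
  Polynomial.aevalTower (Polynomial.aeval (X 1 : AA)) (X 0)

def toA₂ : BB →ₐ[ZMod 2] AA :=
  Polynomial.aevalTower (Polynomial.aeval (X 0 : AA)) (X 1)

@[simp] lemma toB_X0 : toB (X 0) = Polynomial.X := by simp [toB]
@[simp] lemma toB_X1 : toB (X 1) = Polynomial.C Polynomial.X := by simp [toB]
@[simp] lemma toB₂_X0 : toB₂ (X 0) = Polynomial.C Polynomial.X := by simp [toB₂]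
@[simp] lemma toB₂_X1 : toB₂ (X 1) = Polynomial.X := by simp [toB₂]

lemma toA_toB (p : AA) : toA (toB p) = p := by
  have : (toA.comp toB) = AlgHom.id (ZMod 2) AA := by
    apply MvPolynomial.algHom_ext
    intro i
    fin_cases i <;> simp [toA, toB]
  exact congrArg (fun f => f p) (congrArg DFunLike.coe this)

lemma toA₂_toB₂ (p : AA) : toA₂ (toB₂ p) = p := by
  have : (toA₂.comp toB₂) = AlgHom.id (ZMod 2) AA := by
    apply MvPolynomial.algHom_ext
    intro i
    fin_cases i <;> simp [toA₂, toB₂]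
  exact congrArg (fun f => f p) (congrArg DFunLike.coe this)

lemma toB_toA (q : BB) : toB (toA q) = q := by
  have : ((toB.comp toA : BB →ₐ[ZMod 2] BB) : BB →+* BB) = RingHom.id BB := by
    apply Polynomial.ringHom_ext'
    · apply Polynomial.ringHom_ext'
      · exact Subsingleton.elim _ _
      · simp [toA, toB]
    · simp [toA, toB]
  exact congrArg (fun f => f q) (congrArg DFunLike.coe this)

lemma toB₂_toA₂ (q : BB) : toB₂ (toA₂ q) = q := by
  have : ((toB₂.comp toA₂ : BB →ₐ[ZMod 2] BB) : BB →+* BB) = RingHom.id BB := by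
    apply Polynomial.ringHom_ext'
    · apply Polynomial.ringHom_ext'
      · exact Subsingleton.elim _ _
      · simp [toA₂, toB₂]
    · simp [toA₂, toB₂]
  exact congrArg (fun f => f q) (congrArg DFunLike.coe this)

lemma toB_inj : Function.Injective toB := Function.LeftInverse.injective toA_toB
lemma toB₂_inj : Function.Injective toB₂ := Function.LeftInverse.injective toA₂_toB₂

end Charts

noncomputable section Concrete
open MvPolynomial

def d1 : AA := X 0 ^ 2 + X 0 * X 1 + X 1 ^ 2
def d2 : AA := X 0 ^ 2 * X 1 + X 0 * X 1 ^ 2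

def alf : AA →ₐ[ZMod 2] AA := aeval ![X 0, d1]
def bet' : AA →ₐ[ZMod 2] AA := aeval ![X 1, X 0 ^ 3 + X 0 * X 1]
def bet : AA →ₐ[ZMod 2] AA := aeval ![d1, d2]

/-- the quadratic F = Y^2 + tY + t^2 -/
def FF : BB := Polynomial.X ^ 2 + Polynomial.C Polynomial.X * Polynomial.X
  + Polynomial.C (Polynomial.X ^ 2)
/-- the cubic G = Y^3 + tY -/
def GG : BB := Polynomial.X ^ 3 + Polynomial.C Polynomial.X * Polynomial.X

lemma FF_rest_degree : (Polynomial.C (Polynomial.X : PP) * Polynomial.X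
    + Polynomial.C ((Polynomial.X : PP) ^ 2)).degree < 2 := by
  refine lt_of_le_of_lt (Polynomial.degree_add_le _ _) (max_lt ?_ ?_)
  · refine lt_of_le_of_lt (Polynomial.degree_mul_le _ _) ?_
    calc (Polynomial.C (Polynomial.X : PP)).degree + (Polynomial.X : BB).degree
        ≤ 0 + 1 := add_le_add Polynomial.degree_C_le (by simp)
      _ < 2 := by norm_num
  · exact lt_of_le_of_lt Polynomial.degree_C_le (by norm_num)

lemma GG_rest_degree : (Polynomial.C (Polynomial.X : PP) * Polynomial.X).degree < 3 := by
  refine lt_of_le_of_lt (Polynomial.degree_mul_le _ _) ?_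
  calc (Polynomial.C (Polynomial.X : PP)).degree + (Polynomial.X : BB).degree
      ≤ 0 + 1 := add_le_add Polynomial.degree_C_le (by simp)
    _ < 3 := by norm_num

lemma FF_monic : FF.Monic := by
  have := Polynomial.monic_X_pow_add (n := 2) FF_rest_degree
  simpa [FF, add_assoc] using this

lemma GG_monic : GG.Monic := by
  have := Polynomial.monic_X_pow_add (n := 3) GG_rest_degree
  simpa [GG] using this

lemma FF_degree : FF.degree = 2 := by
  rw [FF, add_assoc, Polynomial.degree_add_eq_left_of_degree_lt
    (by simpa [Polynomial.degree_X_pow] using FF_rest_degree)]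
  simp [Polynomial.degree_X_pow]

lemma GG_degree : GG.degree = 3 := by
  rw [GG, Polynomial.degree_add_eq_left_of_degree_lt
    (by simpa [Polynomial.degree_X_pow] using GG_rest_degree)]
  simp [Polynomial.degree_X_pow]

lemma FF_natDegree : FF.natDegree = 2 := Polynomial.natDegree_eq_of_degree_eq_some FF_degree
lemma GG_natDegree : GG.natDegree = 3 := Polynomial.natDegree_eq_of_degree_eq_some GG_degree

end Concrete

noncomputable section Charts2
open MvPolynomial

lemma two_AA : (2 : AA) = 0 := by
  have h : (2 : AA) = algebraMap (ZMod 2) AA 2 := by rw [_root_.map_ofNat]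
  rw [h, show (2 : ZMod 2) = 0 from rfl, _root_.map_zero]

lemma toB₂_d1 : toB₂ d1 = FF := by
  simp only [d1, FF, _root_.map_add, _root_.map_mul, _root_.map_pow, toB₂_X0, toB₂_X1]
  ring

lemma toB_cubic : toB (X 0 ^ 3 + X 0 * X 1) = GG := by
  simp only [GG, _root_.map_add, _root_.map_mul, _root_.map_pow, toB_X0, toB_X1]
  ring

lemma toB₂_alf (p : AA) : toB₂ (alf p) = (toB₂ p).comp FF := by
  have key : (toB₂ : AA →+* BB).comp (alf : AA →+* AA)
      = (Polynomial.eval₂RingHom Polynomial.C FF).comp (toB₂ : AA →+* BB) := by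
    apply MvPolynomial.ringHom_ext
    · intro a
      simp [alf, Polynomial.eval₂_C]
    · intro i
      fin_cases i
      · simp [alf, toB₂_d1]
      · simpa [alf, toB₂_d1] using toB₂_d1
  have := congrArg (fun f => f p) (congrArg DFunLike.coe key)
  simpa [Polynomial.comp] using this

lemma toB_bet' (p : AA) : toB (bet' p) = (toB₂ p).comp GG := by
  have key : (toB : AA →+* BB).comp (bet' : AA →+* AA)
      = (Polynomial.eval₂RingHom Polynomial.C GG).comp (toB₂ : AA →+* BB) := by
    apply MvPolynomial.ringHom_ext
    · intro a
      simp [bet', Polynomial.eval₂_C]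
    · intro i
      fin_cases i
      · simp [bet']
      · simpa [bet'] using toB_cubic
  have := congrArg (fun f => f p) (congrArg DFunLike.coe key)
  simpa [Polynomial.comp] using this

lemma comp_inj {f : BB} (hd : 1 ≤ f.natDegree) :
    Function.Injective (fun q : BB => q.comp f) := by
  intro q1 q2 h
  have hs : (q1 - q2).comp f = 0 := by
    rw [Polynomial.sub_comp, sub_eq_zero]
    exact h
  rcases Polynomial.comp_eq_zero_iff.mp hs with h0 | ⟨_, hC⟩
  · exact sub_eq_zero.mp h0
  · exfalso
    have := congrArg Polynomial.natDegree hC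
    rw [Polynomial.natDegree_C] at this
    omega

lemma alf_inj : Function.Injective alf := by
  intro p q h
  apply toB₂_inj
  apply comp_inj (f := FF) (by rw [FF_natDegree]; norm_num)
  simpa only [toB₂_alf] using congrArg toB₂ h

lemma bet'_inj : Function.Injective bet' := by
  intro p q h
  apply toB₂_inj
  apply comp_inj (f := GG) (by rw [GG_natDegree]; norm_num)
  simpa only [toB_bet'] using congrArg toB h

lemma bet_eq (p : AA) : bet p = alf (bet' p) := by
  have key : bet = alf.comp bet' := by
    apply MvPolynomial.algHom_ext
    intro i
    fin_cases i
    · simp [bet, alf, bet']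
    · simp [bet, alf, bet', d1, d2, _root_.map_add, _root_.map_mul, _root_.map_pow]
      linear_combination (-(X 0 : AA) ^ 3) * two_AA
  rw [key]; rfl

lemma bet_inj : Function.Injective bet := by
  intro p q h
  exact bet'_inj (alf_inj (by simpa only [bet_eq] using h))

end Charts2

noncomputable section Decomp
open MvPolynomial

/-- G1: every polynomial decomposes over the subring generated by X 0, d1 with basis 1, X 1 -/
lemma G1 (p : AA) : ∃ q₀ q₁ : AA, p = alf q₀ + alf q₁ * X 1 := by
  obtain ⟨c, hc⟩ := core_exists FF_monic FF_natDegree (by norm_num) (toB₂ p)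
  refine ⟨toA₂ (c 0), toA₂ (c 1), toB₂_inj ?_⟩
  rw [hc, Fin.sum_univ_two]
  simp only [_root_.map_add, _root_.map_mul, toB₂_alf, toB₂_toA₂, toB₂_X1, Fin.val_zero, Fin.val_one,
    pow_zero, pow_one]
  ring

/-- G2: uniqueness for the decomposition -/
lemma G2 (q₀ q₁ : AA) (h : alf q₀ + alf q₁ * X 1 = 0) : q₀ = 0 ∧ q₁ = 0 := by
  have h' : (∑ i : Fin 2, (![toB₂ q₀, toB₂ q₁] i).comp FF * Polynomial.X ^ (i : ℕ)) = 0 := by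
    rw [Fin.sum_univ_two]
    have := congrArg toB₂ h
    simp only [_root_.map_add, _root_.map_mul, toB₂_alf, toB₂_X1, _root_.map_zero] at this
    simpa [Matrix.cons_val_zero, Matrix.cons_val_one] using this
  have hz := core_zero FF_monic FF_natDegree (by norm_num) _ h'
  constructor
  · have := hz 0
    simp only [Matrix.cons_val_zero] at this
    exact toB₂_inj (by simpa using this)
  · have := hz 1
    simp only [Matrix.cons_val_one, Matrix.head_cons] at this
    exact toB₂_inj (by simpa using this)

/-- G4': decomposition over the image of bet' with basis 1, X 0, X 0 ^ 2 -/
lemma G4' (q : AA) : ∃ r : Fin 3 → AA, q = ∑ i : Fin 3, bet' (r i) * X 0 ^ (i : ℕ) := by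
  obtain ⟨c, hc⟩ := core_exists GG_monic GG_natDegree (by norm_num) (toB q)
  refine ⟨fun i => toA₂ (c i), toB_inj ?_⟩
  rw [_root_.map_sum, hc]
  refine Finset.sum_congr rfl fun i _ => ?_
  rw [_root_.map_mul, _root_.map_pow, toB_bet', toB₂_toA₂, toB_X0]

/-- G5': uniqueness -/
lemma G5' (s : Fin 3 → AA) (h : ∑ i : Fin 3, bet' (s i) * X 0 ^ (i : ℕ) = 0) :
    ∀ i, s i = 0 := by
  have h' : (∑ i : Fin 3, (toB₂ (s i)).comp GG * Polynomial.X ^ (i : ℕ)) = 0 := by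
    have := congrArg toB h
    rw [_root_.map_sum, _root_.map_zero] at this
    rw [← this]
    refine Finset.sum_congr rfl fun i _ => ?_
    rw [_root_.map_mul, _root_.map_pow, toB_bet', toB_X0]
  have hz := core_zero GG_monic GG_natDegree (by norm_num) _ h'
  intro i
  exact toB₂_inj (by simpa using hz i)

end Decomp

noncomputable section Invariance
open MvPolynomial

lemma zmod2_cases (x : ZMod 2) : x = 0 ∨ x = 1 := by revert x; decide

lemma inv_d (g : GL (Fin 2) (ZMod 2)) :
    substAction g d1 = d1 ∧ substAction g d2 = d2 := by
  set M : Matrix (Fin 2) (Fin 2) (ZMod 2) := (g : Matrix (Fin 2) (Fin 2) (ZMod 2)) with hM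
  have hdet : IsUnit M.det := (Matrix.isUnit_iff_isUnit_det M).mp g.isUnit
  rw [Matrix.det_fin_two] at hdet
  have e1 : substAction g d1
      = (M 0 0 • X 0 + M 0 1 • X 1) ^ 2
        + (M 0 0 • X 0 + M 0 1 • X 1) * (M 1 0 • X 0 + M 1 1 • X 1)
        + (M 1 0 • X 0 + M 1 1 • X 1) ^ 2 := by
    simp [substAction, d1, Fin.sum_univ_two, ← hM]
  have e2 : substAction g d2
      = (M 0 0 • X 0 + M 0 1 • X 1) ^ 2 * (M 1 0 • X 0 + M 1 1 • X 1)
        + (M 0 0 • X 0 + M 0 1 • X 1) * (M 1 0 • X 0 + M 1 1 • X 1) ^ 2 := by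
    simp [substAction, d2, Fin.sum_univ_two, ← hM]
  rcases zmod2_cases (M 0 0) with ha | ha <;> rcases zmod2_cases (M 0 1) with hb | hb <;>
    rcases zmod2_cases (M 1 0) with hc | hc <;> rcases zmod2_cases (M 1 1) with hd | hd <;>
      rw [ha, hb, hc, hd] at hdet e1 e2 <;>
      first
      | (exfalso; revert hdet; decide)
      | (refine ⟨?_, ?_⟩ <;>
          (first | rw [e1] | rw [e2]) <;>
          simp only [zero_smul, one_smul, zero_add, add_zero, d1, d2] <;>
          (first
            | ring1
            | linear_combination (X 0 * X 1 + X 1 ^ 2 : AA) * two_AA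
            | linear_combination (X 0 * X 1 ^ 2 + X 1 ^ 3 : AA) * two_AA
            | linear_combination (X 0 ^ 2 + X 0 * X 1 : AA) * two_AA
            | linear_combination (X 0 ^ 3 + X 0 ^ 2 * X 1 : AA) * two_AA))

end Invariance

noncomputable section Main
open MvPolynomial

def tU : GL (Fin 2) (ZMod 2) :=
  ⟨!![1,0;1,1], !![1,0;1,1], by decide, by decide⟩

def rU : GL (Fin 2) (ZMod 2) :=
  ⟨!![0,1;1,1], !![1,1;1,0], by decide, by decide⟩

lemma subst_tU (p : AA) : substAction tU p = MvPolynomial.aeval ![X 0, X 0 + X 1] p := by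
  have key : substAction tU = MvPolynomial.aeval ![X 0, X 0 + X 1] := by
    apply MvPolynomial.algHom_ext
    intro i
    have hM : (tU : Matrix (Fin 2) (Fin 2) (ZMod 2)) = !![1,0;1,1] := rfl
    fin_cases i <;>
      simp [substAction, hM, Fin.sum_univ_two, Matrix.cons_val_zero, Matrix.cons_val_one,
        Matrix.head_cons]
  rw [key]

lemma subst_rU (p : AA) : substAction rU p = MvPolynomial.aeval ![X 1, X 0 + X 1] p := by
  have key : substAction rU = MvPolynomial.aeval ![X 1, X 0 + X 1] := by
    apply MvPolynomial.algHom_ext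
    intro i
    have hM : (rU : Matrix (Fin 2) (Fin 2) (ZMod 2)) = !![0,1;1,1] := rfl
    fin_cases i <;>
      simp [substAction, hM, Fin.sum_univ_two, Matrix.cons_val_zero, Matrix.cons_val_one,
        Matrix.head_cons]
  rw [key]

lemma bet_mem (q : AA) : bet q ∈ Algebra.adjoin (ZMod 2) ({d1, d2} : Set AA) := by
  have hr : Set.range ![d1, d2] = ({d1, d2} : Set AA) := by
    ext z
    simp [Fin.exists_fin_two, or_comm]
  rw [← hr, Algebra.adjoin_range_eq_range_aeval]
  exact ⟨q, rfl⟩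

lemma forward (p : AA) (hp : ∀ g : GL (Fin 2) (ZMod 2), substAction g p = p) :
    p ∈ Algebra.adjoin (ZMod 2) ({d1, d2} : Set AA) := by
  obtain ⟨q₀, q₁, hq⟩ := G1 p
  set σ : AA →ₐ[ZMod 2] AA := MvPolynomial.aeval ![X 0, X 0 + X 1] with hσ
  have hσalf : ∀ q, σ (alf q) = alf q := by
    have key : σ.comp alf = alf := by
      apply MvPolynomial.algHom_ext
      intro i
      fin_cases i
      · simp [alf, hσ]
      · have hd1 : σ d1 = d1 := by rw [← subst_tU]; exact (inv_d tU).1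
        simpa [alf, hσ] using hd1
    exact fun q => congrArg (fun f => f q) (congrArg DFunLike.coe key)
  have ht : σ p = p := by rw [← subst_tU]; exact hp tU
  have h10 : alf q₁ * X 0 = 0 := by
    have h1 : alf q₀ + alf q₁ * (X 0 + X 1) = alf q₀ + alf q₁ * X 1 := by
      calc alf q₀ + alf q₁ * (X 0 + X 1) = σ p := by
            rw [hq, _root_.map_add, _root_.map_mul, hσalf, hσalf]
            simp [hσ]
        _ = p := ht
        _ = alf q₀ + alf q₁ * X 1 := hq
    linear_combination h1
  have h1z : alf q₁ = 0 := by
    rcases mul_eq_zero.mp h10 with h | h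
    · exact h
    · exact absurd h (MvPolynomial.X_ne_zero 0)
  have hpq : p = alf q₀ := by rw [hq, h1z, zero_mul, add_zero]
  obtain ⟨r, hr⟩ := G4' q₀
  have hp2 : p = ∑ i : Fin 3, bet (r i) * X 0 ^ (i : ℕ) := by
    rw [hpq, hr, _root_.map_sum]
    refine Finset.sum_congr rfl fun i _ => ?_
    rw [_root_.map_mul, _root_.map_pow, ← bet_eq]
    congr 1
    simp [alf]
  set τ : AA →ₐ[ZMod 2] AA := MvPolynomial.aeval ![X 1, X 0 + X 1] with hτ
  have hτbet : ∀ q, τ (bet q) = bet q := by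
    have key : τ.comp bet = bet := by
      apply MvPolynomial.algHom_ext
      intro i
      have hd1 : τ d1 = d1 := by rw [← subst_rU]; exact (inv_d rU).1
      have hd2 : τ d2 = d2 := by rw [← subst_rU]; exact (inv_d rU).2
      fin_cases i
      · simpa [bet, hτ] using hd1
      · simpa [bet, hτ] using hd2
    exact fun q => congrArg (fun f => f q) (congrArg DFunLike.coe key)
  have hE : ∑ i : Fin 3, bet (r i) * X 1 ^ (i : ℕ) = ∑ i : Fin 3, bet (r i) * X 0 ^ (i : ℕ) := by
    have hτp : τ p = p := by rw [← subst_rU]; exact hp rU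
    calc ∑ i : Fin 3, bet (r i) * X 1 ^ (i : ℕ) = τ p := by
          rw [hp2, _root_.map_sum]
          refine (Finset.sum_congr rfl fun i _ => ?_).symm
          rw [_root_.map_mul, _root_.map_pow, hτbet]
          congr 1
          simp [hτ]
      _ = p := hτp
      _ = _ := hp2
  have key : alf (bet' (r 1) * X 0 + bet' (r 2) * X 0 ^ 2 + bet' (r 2) * (X 1 + X 0 ^ 2))
      + alf (bet' (r 1) + bet' (r 2) * X 0) * X 1 = 0 := by
    have hE' := hE
    rw [Fin.sum_univ_three, Fin.sum_univ_three] at hE'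
    simp only [_root_.map_add, _root_.map_mul, _root_.map_pow, ← bet_eq] at *
    have ha0 : alf (X 0) = X 0 := by simp [alf]
    have ha1 : alf (X 1) = d1 := by simp [alf]
    rw [ha0, ha1, d1]
    rw [show ((0 : Fin 3) : ℕ) = 0 from rfl, show ((1 : Fin 3) : ℕ) = 1 from rfl,
      show ((2 : Fin 3) : ℕ) = 2 from rfl] at hE'
    linear_combination hE' + (bet (r 1) * X 0 + 2 * bet (r 2) * X 0 ^ 2
      + bet (r 2) * X 0 * X 1 : AA) * two_AA
  obtain ⟨hQ0, hQ1⟩ := G2 _ _ key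
  have hr1 : r 1 = 0 ∧ r 2 = 0 := by
    have h5 := G5' ![r 1, r 2, 0] (by
      rw [Fin.sum_univ_three]
      simpa [hQ1] using hQ1)
    exact ⟨by simpa using h5 0, by simpa using h5 1⟩
  have : p = bet (r 0) := by
    rw [hp2, Fin.sum_univ_three, hr1.1, hr1.2]
    simp
  rw [this]
  exact bet_mem (r 0)

lemma backward (p : AA) (hp : p ∈ Algebra.adjoin (ZMod 2) ({d1, d2} : Set AA)) :
    ∀ g : GL (Fin 2) (ZMod 2), substAction g p = p := by
  intro g
  induction hp using Algebra.adjoin_induction with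
  | mem x hx =>
    rcases hx with hx | hx
    · rw [hx]; exact (inv_d g).1
    · rw [Set.mem_singleton_iff.mp hx]; exact (inv_d g).2
  | algebraMap r => exact (substAction g).commutes r
  | add x y _ _ hx hy => rw [_root_.map_add, hx, hy]
  | mul x y _ _ hx hy => rw [_root_.map_mul, hx, hy]

end Main

end DicksonProof

theorem dickson_invariants_D2 :
    (∀ p : MvPolynomial (Fin 2) (ZMod 2),
      (∀ g : GL (Fin 2) (ZMod 2), substAction g p = p) ↔
        p ∈ Algebra.adjoin (ZMod 2)
          ({X 0 ^ 2 + X 0 * X 1 + X 1 ^ 2,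
            X 0 ^ 2 * X 1 + X 0 * X 1 ^ 2} :
            Set (MvPolynomial (Fin 2) (ZMod 2)))) ∧
    AlgebraicIndependent (ZMod 2)
      ![(X 0 ^ 2 + X 0 * X 1 + X 1 ^ 2 : MvPolynomial (Fin 2) (ZMod 2)),
        X 0 ^ 2 * X 1 + X 0 * X 1 ^ 2] := by
  have hset : ({X 0 ^ 2 + X 0 * X 1 + X 1 ^ 2, X 0 ^ 2 * X 1 + X 0 * X 1 ^ 2} :
      Set (MvPolynomial (Fin 2) (ZMod 2))) = ({d1, d2} : Set AA) := rfl
  constructor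
  · intro p
    rw [hset]
    exact ⟨forward p, backward p⟩
  · have h : ![(X 0 ^ 2 + X 0 * X 1 + X 1 ^ 2 : MvPolynomial (Fin 2) (ZMod 2)),
        X 0 ^ 2 * X 1 + X 0 * X 1 ^ 2] = ![d1, d2] := rfl
    rw [h, algebraicIndependent_iff_injective_aeval]
    exact bet_inj
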